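/- For every Logical Algorithms state σ_LA and every normalized CHR execution state σ = ⟨∅,S,true,T⟩_n of the translated program T(P) with σ_LA = chrToLa(σ): there exists an LA transition σ_LA →_P σ'_LA if and only if there exists an ω_p transition σ →_{T(P)} σ' firing a non-implied rule instance such that σ'_LA = chrToLa(σ'). -/

import Mathlib

namespace LA2CHR

/-- Mode indicators: positively asserted (`p`), negatively asserted (`n`), or both (`b`). -/
inductive Mode : Type
  | p | n | b
deriving DecidableEq

/-- CHR constraints of the translated program `T(P)`: for each ground user-defined
LA atom `a`, `raw a` is the CHR constraint `a(X̄)`, `rawDel a` is `del(a(X̄))`, and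
`rep a m` is the representation constraint `a_r(X̄, m)` with mode indicator `m`. -/
inductive TC (α : Type) : Type
  | raw : α → TC α
  | rawDel : α → TC α
  | rep : α → Mode → TC α
deriving DecidableEq

/-- Ground Logical Algorithms assertions: positive (`pos a` is `a`) or
negative (`del a` is `del(a)`). -/
inductive LAAtom (α : Type) : Type
  | pos : α → LAAtom α
  | del : α → LAAtom α
deriving DecidableEq

/-- A ground instance of a Logical Algorithms rule, with the comparison antecedents
already evaluated away: a ground instance belongs to the program iff its comparisons
are true.  `posA` are the (distinct) positive user-defined ground antecedents, `negA`
the atoms of the negative (`del`) antecedents, `concl` the instantiated conclusion and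
`prio` the instantiated rule priority. -/
structure Inst (α : Type) where
  prio : ℕ
  posA : Finset α
  negA : Finset α
  concl : Finset (LAAtom α)

variable {α : Type}

/-- Applicability of a ground rule instance of `P` in an LA state
(the priority condition is not included). -/
def LAApplicable (P : Set (Inst α)) (σ : Set (LAAtom α)) (ι : Inst α) : Prop :=
  ι ∈ P ∧ (∀ a ∈ ι.posA, LAAtom.pos a ∈ σ ∧ LAAtom.del a ∉ σ) ∧
    (∀ a ∈ ι.negA, LAAtom.del a ∈ σ) ∧ ¬ ↑ι.concl ⊆ σ

/-- The `Apply` transition of Logical Algorithms: a highest-priority applicable ground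
rule instance whose conclusion is not yet contained in the state fires. -/
def LAStep (P : Set (Inst α)) (σ σ' : Set (LAAtom α)) : Prop :=
  ∃ ι, LAApplicable P σ ι ∧ σ' = σ ∪ ↑ι.concl ∧
    ∀ ι', LAApplicable P σ ι' → ι.prio ≤ ι'.prio

/-- Names of the rules of the translated CHR^rp program `T(P)`: the six
set/deletion-semantics rule schemas (for all user-defined predicates at once,
instantiated per ground atom), and one propagation rule per ground LA rule instance
(the ground collapse of the rules `r_ρ`). -/
inductive RuleTag (α : Type) : Type
  | keepPos | mergePos | newPos | keepNeg | mergeNeg | newNeg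
  | inst : Inst α → RuleTag α

/-- Rule priorities of `T(P)`: the update rules have priority 1, the rules creating a
fresh representation have priority 2, and the translation of an LA rule of priority
`p` has priority `p + 2`. -/
def RuleTag.prio : RuleTag α → ℕ
  | .keepPos => 1
  | .mergePos => 1
  | .keepNeg => 1
  | .mergeNeg => 1
  | .newPos => 2
  | .newNeg => 2
  | .inst ι => ι.prio + 2

/-- CHR^rp execution states `⟨G, S, true, T⟩_n`: goal, CHR constraint store of
identified constraints, propagation history (recording a rule together with the set of
identified constraints it fired on) and next free identifier.  As the translated
program has no built-in tell constraints, the built-in store is always `true` and is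
omitted. -/
structure CState (α : Type) where
  goal : Multiset (TC α)
  store : Set (TC α × ℕ)
  hist : Set (RuleTag α × Set (TC α × ℕ))
  next : ℕ

/-- Conclusion atoms as CHR constraints. -/
def toTC : LAAtom α → TC α
  | .pos a => .raw a
  | .del a => .rawDel a

/-- `Fires P χ t H R B`: rule `t` of `T(P)` has an instance in state `χ` matching the
set `H` of identified stored head constraints, of which the ones in `R` are removed,
with instantiated body `B`.  This comprises all conditions of the ω_p `Apply`
transition except the empty-goal, propagation-history and priority conditions. -/
inductive Fires (P : Set (Inst α)) (χ : CState α) :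
    RuleTag α → Set (TC α × ℕ) → Set (TC α × ℕ) → Multiset (TC α) → Prop
  | keepPos (a : α) (m : Mode) (i j : ℕ) : m ≠ Mode.n →
      (TC.rep a m, i) ∈ χ.store → (TC.raw a, j) ∈ χ.store →
      Fires P χ .keepPos {(TC.rep a m, i), (TC.raw a, j)} {(TC.raw a, j)} 0
  | mergePos (a : α) (i j : ℕ) :
      (TC.rep a Mode.n, i) ∈ χ.store → (TC.raw a, j) ∈ χ.store →
      Fires P χ .mergePos {(TC.rep a Mode.n, i), (TC.raw a, j)}
        {(TC.rep a Mode.n, i), (TC.raw a, j)} {TC.rep a Mode.b}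
  | newPos (a : α) (j : ℕ) : (TC.raw a, j) ∈ χ.store →
      Fires P χ .newPos {(TC.raw a, j)} {(TC.raw a, j)} {TC.rep a Mode.p}
  | keepNeg (a : α) (m : Mode) (i j : ℕ) : m ≠ Mode.p →
      (TC.rep a m, i) ∈ χ.store → (TC.rawDel a, j) ∈ χ.store →
      Fires P χ .keepNeg {(TC.rep a m, i), (TC.rawDel a, j)} {(TC.rawDel a, j)} 0
  | mergeNeg (a : α) (i j : ℕ) :
      (TC.rep a Mode.p, i) ∈ χ.store → (TC.rawDel a, j) ∈ χ.store →
      Fires P χ .mergeNeg {(TC.rep a Mode.p, i), (TC.rawDel a, j)}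
        {(TC.rep a Mode.p, i), (TC.rawDel a, j)} {TC.rep a Mode.b}
  | newNeg (a : α) (j : ℕ) : (TC.rawDel a, j) ∈ χ.store →
      Fires P χ .newNeg {(TC.rawDel a, j)} {(TC.rawDel a, j)} {TC.rep a Mode.n}
  | inst (ι : Inst α) (fp fn : α → ℕ) (fm : α → Mode) : ι ∈ P →
      (∀ a ∈ ι.posA, (TC.rep a Mode.p, fp a) ∈ χ.store) →
      (∀ a ∈ ι.negA, fm a ≠ Mode.p ∧ (TC.rep a (fm a), fn a) ∈ χ.store) →
      Fires P χ (.inst ι)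
        ((fun a => (TC.rep a Mode.p, fp a)) '' ↑ι.posA ∪
          (fun a => (TC.rep a (fm a), fn a)) '' ↑ι.negA)
        ∅ (Multiset.map toTC ι.concl.val)

/-- Transition labels: `Introduce`, or `Apply` of a given rule of `T(P)`. -/
inductive Lab (α : Type) : Type
  | intro : Lab α
  | apply : RuleTag α → Lab α

variable [DecidableEq α]

/-- The transitions of the priority semantics ω_p for the translated program `T(P)`:
`Introduce` moves a constraint from the goal to the store with a fresh identifier;
`Apply` (possible only when the goal is empty) fires an instance of a rule whose
history tuple is not yet recorded and such that no fireable rule instance has a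
strictly higher priority. -/
inductive Step (P : Set (Inst α)) : CState α → Lab α → CState α → Prop
  | intro (χ : CState α) (c : TC α) : c ∈ χ.goal →
      Step P χ .intro ⟨χ.goal.erase c, insert (c, χ.next) χ.store, χ.hist, χ.next + 1⟩
  | apply (χ : CState α) (t : RuleTag α) (H R : Set (TC α × ℕ)) (B : Multiset (TC α)) :
      χ.goal = 0 → Fires P χ t H R B → (t, H) ∉ χ.hist →
      (∀ t' H' R' B', Fires P χ t' H' R' B' → (t', H') ∉ χ.hist →
        RuleTag.prio t ≤ RuleTag.prio t') →
      Step P χ (.apply t) ⟨B, χ.store \ R, insert (t, H) χ.hist, χ.next⟩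

/-- Some ω_p transition. -/
def StepAny (P : Set (Inst α)) (χ χ' : CState α) : Prop := ∃ l, Step P χ l χ'

/-- An ω_p transition that is an `Introduce` or fires a rule of priority 1 or 2. -/
def Step2 (P : Set (Inst α)) (χ χ' : CState α) : Prop :=
  ∃ l, Step P χ l χ' ∧ ∀ t, l = Lab.apply t → RuleTag.prio t ≤ 2

/-- Membership in `A = G ∪ chr(S)`. -/
def memA (χ : CState α) (c : TC α) : Prop := c ∈ χ.goal ∨ ∃ i, (c, i) ∈ χ.store

/-- The mapping from (reachable) CHR^rp execution states of `T(P)` to LA states. -/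
def chrToLa (χ : CState α) : Set (LAAtom α) :=
  {x | (∃ a, x = LAAtom.pos a ∧
          (memA χ (TC.raw a) ∨ ∃ m, m ≠ Mode.n ∧ memA χ (TC.rep a m))) ∨
       (∃ a, x = LAAtom.del a ∧
          (memA χ (TC.rawDel a) ∨ ∃ m, m ≠ Mode.p ∧ memA χ (TC.rep a m)))}

/-- Initial states `⟨G, ∅, true, ∅⟩_n` where the goal `G` contains only constraints of
the forms `a(X̄)` and `del(a(X̄))` (no `a_r` constraints). -/
def Init (χ : CState α) : Prop :=
  (∀ c ∈ χ.goal, ∃ a, c = TC.raw a ∨ c = TC.rawDel a) ∧ χ.store = ∅ ∧ χ.hist = ∅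

/-- Reachability (w.r.t. ω_p and program `T(P)`) from an initial state. -/
def Reachable (P : Set (Inst α)) (χ : CState α) : Prop :=
  ∃ χ₀, Init χ₀ ∧ Relation.ReflTransGen (StepAny P) χ₀ χ

/-- Pre-normal form: empty goal, the store contains only `a_r(X̄, M)` constraints, and
two stored representations of the same atom have the same identifier. -/
def PreNormal (χ : CState α) : Prop :=
  χ.goal = 0 ∧ (∀ c ∈ χ.store, ∃ a m, c.1 = TC.rep a m) ∧
  ∀ a m₁ m₂ i₁ i₂, (TC.rep a m₁, i₁) ∈ χ.store → (TC.rep a m₂, i₂) ∈ χ.store → i₁ = i₂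

/-- A rule instance is implied in a state `σ` if its conclusion is contained in
`chrToLa σ`. -/
def Implied (ι : Inst α) (χ : CState α) : Prop := ↑ι.concl ⊆ chrToLa χ

end LA2CHR

namespace LA2CHR

variable {α : Type} [DecidableEq α]

/-- A pre-normalized CHR execution state is in normal form if it is a final state or
some ω_p transition from it fires a non-implied rule instance. -/
def Normalized (P : Set (Inst α)) (χ : CState α) : Prop :=
  PreNormal χ ∧
    ((∀ l χ', ¬ Step P χ l χ') ∨
      ∃ ι χ', Step P χ (Lab.apply (RuleTag.inst ι)) χ' ∧ ¬ Implied ι χ)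

end LA2CHR

namespace LA2CHR

variable {α : Type} [DecidableEq α]

lemma toTC_ne_rep (x : LAAtom α) (a : α) (m : Mode) : toTC x ≠ TC.rep a m := by
  cases x <;> simp [toTC]

lemma mem_chrToLa_pos (χ : CState α) (a : α) :
    LAAtom.pos a ∈ chrToLa χ ↔
      memA χ (TC.raw a) ∨ ∃ m, m ≠ Mode.n ∧ memA χ (TC.rep a m) := by
  simp [chrToLa]

lemma mem_chrToLa_del (χ : CState α) (a : α) :
    LAAtom.del a ∈ chrToLa χ ↔
      memA χ (TC.rawDel a) ∨ ∃ m, m ≠ Mode.p ∧ memA χ (TC.rep a m) := by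
  simp [chrToLa]

/-- The invariant maintained along reachability. -/
def Inv (P : Set (Inst α)) (χ : CState α) : Prop :=
  (∀ c i, (c, i) ∈ χ.store → i < χ.next) ∧
  (∀ t H, (t, H) ∈ χ.hist → ∀ c i, (c, i) ∈ H → i < χ.next) ∧
  (∀ t H, (t, H) ∈ χ.hist → ∀ a j,
      ((TC.raw a, j) ∈ H → (TC.raw a, j) ∉ χ.store) ∧
      ((TC.rawDel a, j) ∈ H → (TC.rawDel a, j) ∉ χ.store)) ∧
  (∀ a m₁ i₁ m₂ i₂, (TC.rep a m₁, i₁) ∈ χ.store → (TC.rep a m₂, i₂) ∈ χ.store →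
      m₁ = m₂ ∧ i₁ = i₂) ∧
  (∀ a m, TC.rep a m ∈ χ.goal →
      (∀ m' i, (TC.rep a m', i) ∉ χ.store) ∧
      (∀ m', TC.rep a m' ∈ χ.goal → m' = m) ∧ χ.goal.count (TC.rep a m) ≤ 1) ∧
  (∀ ι H, (RuleTag.inst ι, H) ∈ χ.hist → ↑ι.concl ⊆ chrToLa χ)

lemma fires_H_sub {P : Set (Inst α)} {χ : CState α} {t H R B}
    (h : Fires P χ t H R B) : ∀ p ∈ H, p ∈ χ.store := by
  intro p hp
  cases h with
  | keepPos a m i j hm h1 h2 =>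
    rcases hp with hp | hp
    · exact hp ▸ h1
    · rw [Set.mem_singleton_iff] at hp; exact hp ▸ h2
  | mergePos a i j h1 h2 =>
    rcases hp with hp | hp
    · exact hp ▸ h1
    · rw [Set.mem_singleton_iff] at hp; exact hp ▸ h2
  | newPos a j h1 => rw [Set.mem_singleton_iff] at hp; exact hp ▸ h1
  | keepNeg a m i j hm h1 h2 =>
    rcases hp with hp | hp
    · exact hp ▸ h1
    · rw [Set.mem_singleton_iff] at hp; exact hp ▸ h2
  | mergeNeg a i j h1 h2 =>
    rcases hp with hp | hp
    · exact hp ▸ h1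
    · rw [Set.mem_singleton_iff] at hp; exact hp ▸ h2
  | newNeg a j h1 => rw [Set.mem_singleton_iff] at hp; exact hp ▸ h1
  | inst ι fp fn fm hP hpos hneg =>
    rcases hp with hp | hp
    · obtain ⟨a, ha, rfl⟩ := hp
      exact hpos a (by simpa using ha)
    · obtain ⟨a, ha, rfl⟩ := hp
      exact (hneg a (by simpa using ha)).2

lemma fires_raw_removed {P : Set (Inst α)} {χ : CState α} {t H R B}
    (h : Fires P χ t H R B) : ∀ a j,
      ((TC.raw a, j) ∈ H → (TC.raw a, j) ∈ R) ∧
      ((TC.rawDel a, j) ∈ H → (TC.rawDel a, j) ∈ R) := by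
  intro a j
  cases h with
  | keepPos a' m i j' hm h1 h2 =>
    constructor <;> intro hp <;>
      simp only [Set.mem_insert_iff, Set.mem_singleton_iff, Prod.mk.injEq] at hp ⊢ <;>
      tauto
  | mergePos a' i j' h1 h2 =>
    constructor <;> intro hp <;>
      simp only [Set.mem_insert_iff, Set.mem_singleton_iff, Prod.mk.injEq] at hp ⊢ <;>
      tauto
  | newPos a' j' h1 =>
    constructor <;> intro hp <;>
      simp only [Set.mem_insert_iff, Set.mem_singleton_iff, Prod.mk.injEq] at hp ⊢ <;>
      tauto
  | keepNeg a' m i j' hm h1 h2 =>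
    constructor <;> intro hp <;>
      simp only [Set.mem_insert_iff, Set.mem_singleton_iff, Prod.mk.injEq] at hp ⊢ <;>
      tauto
  | mergeNeg a' i j' h1 h2 =>
    constructor <;> intro hp <;>
      simp only [Set.mem_insert_iff, Set.mem_singleton_iff, Prod.mk.injEq] at hp ⊢ <;>
      tauto
  | newNeg a' j' h1 =>
    constructor <;> intro hp <;>
      simp only [Set.mem_insert_iff, Set.mem_singleton_iff, Prod.mk.injEq] at hp ⊢ <;>
      tauto
  | inst ι fp fn fm hP hpos hneg =>
    constructor <;> intro hp <;>
      rcases hp with ⟨b, hb, he⟩ | ⟨b, hb, he⟩ <;>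
      simp [Prod.mk.injEq] at he

lemma fires_inst_inv {P : Set (Inst α)} {χ : CState α} {ι : Inst α} {H R B}
    (h : Fires P χ (.inst ι) H R B) :
    ι ∈ P ∧ R = ∅ ∧ B = Multiset.map toTC ι.concl.val ∧
    ∃ (fp fn : α → ℕ) (fm : α → Mode), (∀ a ∈ ι.posA, (TC.rep a Mode.p, fp a) ∈ χ.store) ∧
      (∀ a ∈ ι.negA, fm a ≠ Mode.p ∧ (TC.rep a (fm a), fn a) ∈ χ.store) := by
  cases h with
  | inst ι fp fn fm hP hpos hneg => exact ⟨hP, rfl, rfl, fp, fn, fm, hpos, hneg⟩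

lemma chrToLa_sub_of_removed (χ : CState α) (hg : χ.goal = 0) (B : Multiset (TC α))
    (R : Set (TC α × ℕ)) (hist' : Set (RuleTag α × Set (TC α × ℕ))) (next' : ℕ)
    (hraw : ∀ a k, (TC.raw a, k) ∈ R →
      ∃ m, m ≠ Mode.n ∧ (TC.rep a m ∈ B ∨ ∃ i, (TC.rep a m, i) ∈ χ.store \ R))
    (hrawDel : ∀ a k, (TC.rawDel a, k) ∈ R →
      ∃ m, m ≠ Mode.p ∧ (TC.rep a m ∈ B ∨ ∃ i, (TC.rep a m, i) ∈ χ.store \ R))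
    (hrep : ∀ a m k, (TC.rep a m, k) ∈ R →
      (m ≠ Mode.n → ∃ m', m' ≠ Mode.n ∧
        (TC.rep a m' ∈ B ∨ ∃ i, (TC.rep a m', i) ∈ χ.store \ R)) ∧
      (m ≠ Mode.p → ∃ m', m' ≠ Mode.p ∧
        (TC.rep a m' ∈ B ∨ ∃ i, (TC.rep a m', i) ∈ χ.store \ R))) :
    chrToLa χ ⊆ chrToLa ⟨B, χ.store \ R, hist', next'⟩ := by
  intro x hx
  simp only [chrToLa, Set.mem_setOf_eq] at hx ⊢
  have hmA : ∀ c : TC α, memA χ c → ∃ i, (c, i) ∈ χ.store := by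
    intro c hc
    rcases hc with hc | hc
    · rw [hg] at hc; simp at hc
    · exact hc
  have hmA' : ∀ c : TC α, (c ∈ B ∨ ∃ i, (c, i) ∈ χ.store \ R) →
      memA ⟨B, χ.store \ R, hist', next'⟩ c := by
    intro c hc
    rcases hc with hc | ⟨i, hi⟩
    exacts [Or.inl hc, Or.inr ⟨i, hi⟩]
  rcases hx with ⟨a, rfl, hx⟩ | ⟨a, rfl, hx⟩
  · refine Or.inl ⟨a, rfl, ?_⟩
    rcases hx with hx | ⟨m, hm, hx⟩
    · obtain ⟨k, hk⟩ := hmA _ hx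
      by_cases hkR : (TC.raw a, k) ∈ R
      · obtain ⟨m, hm, hmem⟩ := hraw a k hkR
        exact Or.inr ⟨m, hm, hmA' _ hmem⟩
      · exact Or.inl (hmA' _ (Or.inr ⟨k, hk, hkR⟩))
    · obtain ⟨k, hk⟩ := hmA _ hx
      by_cases hkR : (TC.rep a m, k) ∈ R
      · obtain ⟨m', hm', hmem⟩ := (hrep a m k hkR).1 hm
        exact Or.inr ⟨m', hm', hmA' _ hmem⟩
      · exact Or.inr ⟨m, hm, hmA' _ (Or.inr ⟨k, hk, hkR⟩)⟩
  · refine Or.inr ⟨a, rfl, ?_⟩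
    rcases hx with hx | ⟨m, hm, hx⟩
    · obtain ⟨k, hk⟩ := hmA _ hx
      by_cases hkR : (TC.rawDel a, k) ∈ R
      · obtain ⟨m, hm, hmem⟩ := hrawDel a k hkR
        exact Or.inr ⟨m, hm, hmA' _ hmem⟩
      · exact Or.inl (hmA' _ (Or.inr ⟨k, hk, hkR⟩))
    · obtain ⟨k, hk⟩ := hmA _ hx
      by_cases hkR : (TC.rep a m, k) ∈ R
      · obtain ⟨m', hm', hmem⟩ := (hrep a m k hkR).2 hm
        exact Or.inr ⟨m', hm', hmA' _ hmem⟩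
      · exact Or.inr ⟨m, hm, hmA' _ (Or.inr ⟨k, hk, hkR⟩)⟩

lemma chrToLa_mono {P : Set (Inst α)} {χ χ' : CState α} {l}
    (h : Step P χ l χ') : chrToLa χ ⊆ chrToLa χ' := by
  cases h with
  | intro c hc =>
    intro x hx
    simp only [chrToLa, Set.mem_setOf_eq] at hx ⊢
    have hmA : ∀ d : TC α, memA χ d →
        memA ⟨χ.goal.erase c, insert (c, χ.next) χ.store, χ.hist, χ.next + 1⟩ d := by
      intro d hd
      rcases hd with hd | ⟨i, hi⟩
      · by_cases hdc : d = c
        · exact Or.inr ⟨χ.next, hdc ▸ Set.mem_insert _ _⟩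
        · exact Or.inl ((Multiset.mem_erase_of_ne hdc).2 hd)
      · exact Or.inr ⟨i, Set.mem_insert_of_mem _ hi⟩
    rcases hx with ⟨a, rfl, hx⟩ | ⟨a, rfl, hx⟩
    · exact Or.inl ⟨a, rfl, by
        rcases hx with hx | ⟨m, hm, hx⟩
        exacts [Or.inl (hmA _ hx), Or.inr ⟨m, hm, hmA _ hx⟩]⟩
    · exact Or.inr ⟨a, rfl, by
        rcases hx with hx | ⟨m, hm, hx⟩
        exacts [Or.inl (hmA _ hx), Or.inr ⟨m, hm, hmA _ hx⟩]⟩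
  | apply t H R B hg hf hnh hmin =>
    cases hf with
    | keepPos a m i j hm h1 h2 =>
      apply chrToLa_sub_of_removed χ hg
      · intro b k hbk
        simp only [Set.mem_singleton_iff, Prod.mk.injEq, TC.raw.injEq] at hbk
        obtain ⟨rfl, rfl⟩ := hbk
        exact ⟨m, hm, Or.inr ⟨i, h1, by simp⟩⟩
      · intro b k hbk; simp at hbk
      · intro b m' k hbk; simp at hbk
    | mergePos a i j h1 h2 =>
      apply chrToLa_sub_of_removed χ hg
      · intro b k hbk
        simp only [Set.mem_insert_iff, Set.mem_singleton_iff, Prod.mk.injEq] at hbk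
        rcases hbk with ⟨hbk, _⟩ | ⟨hbk, _⟩
        · exact absurd hbk (by simp)
        · obtain rfl := (TC.raw.inj hbk)
          exact ⟨Mode.b, by decide, Or.inl (by simp)⟩
      · intro b k hbk; simp at hbk
      · intro b m' k hbk
        simp only [Set.mem_insert_iff, Set.mem_singleton_iff, Prod.mk.injEq] at hbk
        rcases hbk with ⟨hbk, _⟩ | ⟨hbk, _⟩
        · obtain ⟨rfl, rfl⟩ := TC.rep.inj hbk
          exact ⟨fun hmn => absurd rfl hmn,
            fun _ => ⟨Mode.b, by decide, Or.inl (by simp)⟩⟩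
        · exact absurd hbk (by simp)
    | newPos a j h1 =>
      apply chrToLa_sub_of_removed χ hg
      · intro b k hbk
        simp only [Set.mem_singleton_iff, Prod.mk.injEq, TC.raw.injEq] at hbk
        obtain ⟨rfl, rfl⟩ := hbk
        exact ⟨Mode.p, by decide, Or.inl (by simp)⟩
      · intro b k hbk; simp at hbk
      · intro b m' k hbk; simp at hbk
    | keepNeg a m i j hm h1 h2 =>
      apply chrToLa_sub_of_removed χ hg
      · intro b k hbk; simp at hbk
      · intro b k hbk
        simp only [Set.mem_singleton_iff, Prod.mk.injEq, TC.rawDel.injEq] at hbk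
        obtain ⟨rfl, rfl⟩ := hbk
        exact ⟨m, hm, Or.inr ⟨i, h1, by simp⟩⟩
      · intro b m' k hbk; simp at hbk
    | mergeNeg a i j h1 h2 =>
      apply chrToLa_sub_of_removed χ hg
      · intro b k hbk; simp at hbk
      · intro b k hbk
        simp only [Set.mem_insert_iff, Set.mem_singleton_iff, Prod.mk.injEq] at hbk
        rcases hbk with ⟨hbk, _⟩ | ⟨hbk, _⟩
        · exact absurd hbk (by simp)
        · obtain rfl := (TC.rawDel.inj hbk)
          exact ⟨Mode.b, by decide, Or.inl (by simp)⟩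
      · intro b m' k hbk
        simp only [Set.mem_insert_iff, Set.mem_singleton_iff, Prod.mk.injEq] at hbk
        rcases hbk with ⟨hbk, _⟩ | ⟨hbk, _⟩
        · obtain ⟨rfl, rfl⟩ := TC.rep.inj hbk
          exact ⟨fun _ => ⟨Mode.b, by decide, Or.inl (by simp)⟩,
            fun hmp => absurd rfl hmp⟩
        · exact absurd hbk (by simp)
    | newNeg a j h1 =>
      apply chrToLa_sub_of_removed χ hg
      · intro b k hbk; simp at hbk
      · intro b k hbk
        simp only [Set.mem_singleton_iff, Prod.mk.injEq, TC.rawDel.injEq] at hbk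
        obtain ⟨rfl, rfl⟩ := hbk
        exact ⟨Mode.n, by decide, Or.inl (by simp)⟩
      · intro b m' k hbk; simp at hbk
    | inst ι fp fn fm hP hpos hneg =>
      apply chrToLa_sub_of_removed χ hg
      · intro b k hbk; simp at hbk
      · intro b k hbk; simp at hbk
      · intro b m' k hbk; simp at hbk

lemma inv_init {P : Set (Inst α)} {χ : CState α} (h : Init χ) : Inv P χ := by
  obtain ⟨hg, hs, hh⟩ := h
  refine ⟨?_, ?_, ?_, ?_, ?_, ?_⟩ <;> simp_all
  intro a m hm
  obtain ⟨b, hb | hb⟩ := hg _ hm <;> simp_all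

lemma inv_step {P : Set (Inst α)} {χ χ' : CState α} {l}
    (hI : Inv P χ) (h : Step P χ l χ') : Inv P χ' := by
  have hmono := chrToLa_mono h
  obtain ⟨hIB, hHB, hHR, hRU, hGR, hHI⟩ := hI
  cases h with
  | intro c hc =>
    refine ⟨?_, ?_, ?_, ?_, ?_, ?_⟩
    · intro c' i hi
      rcases Set.mem_insert_iff.1 hi with hi | hi
      · injection hi with h1 h2
        exact h2 ▸ Nat.lt_succ_self _
      · exact Nat.lt_succ_of_lt (hIB c' i hi)
    · intro t H hH c' i hci
      exact Nat.lt_succ_of_lt (hHB t H hH c' i hci)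
    · intro t H hH a j
      refine ⟨fun hr hst => ?_, fun hr hst => ?_⟩
      · rcases Set.mem_insert_iff.1 hst with hst | hst
        · injection hst with h1 h2
          have := hHB t H hH _ _ hr
          omega
        · exact (hHR t H hH a j).1 hr hst
      · rcases Set.mem_insert_iff.1 hst with hst | hst
        · injection hst with h1 h2
          have := hHB t H hH _ _ hr
          omega
        · exact (hHR t H hH a j).2 hr hst
    · intro a m1 i1 m2 i2 h1 h2
      rcases Set.mem_insert_iff.1 h1 with h1 | h1 <;>
        rcases Set.mem_insert_iff.1 h2 with h2 | h2
      · injection h1 with e1 e1'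
        injection h2 with e2 e2'
        have := e1.trans e2.symm
        exact ⟨(TC.rep.inj this).2, e1'.trans e2'.symm⟩
      · injection h1 with e1 e1'
        have hcg : TC.rep a m1 ∈ χ.goal := by rw [e1]; exact hc
        exact absurd h2 ((hGR a m1 hcg).1 m2 i2)
      · injection h2 with e2 e2'
        have hcg : TC.rep a m2 ∈ χ.goal := by rw [e2]; exact hc
        exact absurd h1 ((hGR a m2 hcg).1 m1 i1)
      · exact hRU a m1 i1 m2 i2 h1 h2
    · intro a m hm
      have hm0 : TC.rep a m ∈ χ.goal := Multiset.mem_of_mem_erase hm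
      obtain ⟨hs, hu, hcnt⟩ := hGR a m hm0
      refine ⟨?_, ?_, ?_⟩
      · intro m' i hi
        rcases Set.mem_insert_iff.1 hi with hi | hi
        · injection hi with e1 e2
          have hcg : TC.rep a m' ∈ χ.goal := by rw [e1]; exact hc
          have hmm : m' = m := hu m' hcg
          subst hmm
          have hce : c = TC.rep a m' := e1.symm
          subst hce
          have h1 := Multiset.count_pos.2 hm
          rw [Multiset.count_erase_self] at h1
          omega
        · exact hs m' i hi
      · intro m' hm'
        exact hu m' (Multiset.mem_of_mem_erase hm')
      · exact le_trans (Multiset.count_le_of_le _ (Multiset.erase_le _ _)) hcnt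
    · intro ι H hH x hx
      exact hmono (hHI ι H hH hx)
  | apply t H R B hg hf hnh hmin =>
    refine ⟨?_, ?_, ?_, ?_, ?_, ?_⟩
    · intro c i hi
      exact hIB c i hi.1
    · intro t' H' hH' c i hci
      rcases Set.mem_insert_iff.1 hH' with hH' | hH'
      · injection hH' with e1 e2
        subst e1; subst e2
        exact hIB c i (fires_H_sub hf _ hci)
      · exact hHB t' H' hH' c i hci
    · intro t' H' hH' a j
      rcases Set.mem_insert_iff.1 hH' with hH' | hH'
      · injection hH' with e1 e2
        subst e1; subst e2
        refine ⟨fun hr hst => ?_, fun hr hst => ?_⟩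
        · exact hst.2 ((fires_raw_removed hf a j).1 hr)
        · exact hst.2 ((fires_raw_removed hf a j).2 hr)
      · exact ⟨fun hr hst => (hHR t' H' hH' a j).1 hr hst.1,
          fun hr hst => (hHR t' H' hH' a j).2 hr hst.1⟩
    · intro a m1 i1 m2 i2 h1 h2
      exact hRU a m1 i1 m2 i2 h1.1 h2.1
    · intro a m hm
      cases hf with
      | keepPos a0 m0 i0 j0 hm0 h1 h2 => simp at hm
      | mergePos a0 i0 j0 h1 h2 =>
        rw [Multiset.mem_singleton] at hm
        obtain ⟨rfl, rfl⟩ := TC.rep.inj hm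
        refine ⟨?_, ?_, ?_⟩
        · intro m' i hi
          obtain ⟨rfl, rfl⟩ := hRU a m' i Mode.n i0 hi.1 h1
          exact hi.2 (Set.mem_insert _ _)
        · intro m' hm'
          rw [Multiset.mem_singleton] at hm'
          exact (TC.rep.inj hm').2
        · simp
      | newPos a0 j0 h1 =>
        rw [Multiset.mem_singleton] at hm
        obtain ⟨rfl, rfl⟩ := TC.rep.inj hm
        refine ⟨?_, ?_, ?_⟩
        · intro m' i hi
          exfalso
          by_cases hmn : m' = Mode.n
          · subst hmn
            have hf' := Fires.mergePos (P := P) (χ := χ) a i j0 hi.1 h1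
            have hnh' : (RuleTag.mergePos,
                ({(TC.rep a Mode.n, i), (TC.raw a, j0)} : Set (TC α × ℕ))) ∉ χ.hist := by
              intro hmem
              exact (hHR _ _ hmem a j0).1 (Set.mem_insert_iff.2 (Or.inr rfl)) h1
            have := hmin _ _ _ _ hf' hnh'
            simp [RuleTag.prio] at this
          · have hf' := Fires.keepPos (P := P) (χ := χ) a m' i j0 hmn hi.1 h1
            have hnh' : (RuleTag.keepPos,
                ({(TC.rep a m', i), (TC.raw a, j0)} : Set (TC α × ℕ))) ∉ χ.hist := by
              intro hmem
              exact (hHR _ _ hmem a j0).1 (Set.mem_insert_iff.2 (Or.inr rfl)) h1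
            have := hmin _ _ _ _ hf' hnh'
            simp [RuleTag.prio] at this
        · intro m' hm'
          rw [Multiset.mem_singleton] at hm'
          exact (TC.rep.inj hm').2
        · simp
      | keepNeg a0 m0 i0 j0 hm0 h1 h2 => simp at hm
      | mergeNeg a0 i0 j0 h1 h2 =>
        rw [Multiset.mem_singleton] at hm
        obtain ⟨rfl, rfl⟩ := TC.rep.inj hm
        refine ⟨?_, ?_, ?_⟩
        · intro m' i hi
          obtain ⟨rfl, rfl⟩ := hRU a m' i Mode.p i0 hi.1 h1
          exact hi.2 (Set.mem_insert _ _)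
        · intro m' hm'
          rw [Multiset.mem_singleton] at hm'
          exact (TC.rep.inj hm').2
        · simp
      | newNeg a0 j0 h1 =>
        rw [Multiset.mem_singleton] at hm
        obtain ⟨rfl, rfl⟩ := TC.rep.inj hm
        refine ⟨?_, ?_, ?_⟩
        · intro m' i hi
          exfalso
          by_cases hmp : m' = Mode.p
          · subst hmp
            have hf' := Fires.mergeNeg (P := P) (χ := χ) a i j0 hi.1 h1
            have hnh' : (RuleTag.mergeNeg,
                ({(TC.rep a Mode.p, i), (TC.rawDel a, j0)} : Set (TC α × ℕ))) ∉ χ.hist := by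
              intro hmem
              exact (hHR _ _ hmem a j0).2 (Set.mem_insert_iff.2 (Or.inr rfl)) h1
            have := hmin _ _ _ _ hf' hnh'
            simp [RuleTag.prio] at this
          · have hf' := Fires.keepNeg (P := P) (χ := χ) a m' i j0 hmp hi.1 h1
            have hnh' : (RuleTag.keepNeg,
                ({(TC.rep a m', i), (TC.rawDel a, j0)} : Set (TC α × ℕ))) ∉ χ.hist := by
              intro hmem
              exact (hHR _ _ hmem a j0).2 (Set.mem_insert_iff.2 (Or.inr rfl)) h1
            have := hmin _ _ _ _ hf' hnh'
            simp [RuleTag.prio] at this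
        · intro m' hm'
          rw [Multiset.mem_singleton] at hm'
          exact (TC.rep.inj hm').2
        · simp
      | inst ι fp fn fm hP hpos hneg =>
        exfalso
        obtain ⟨x, _, he⟩ := Multiset.mem_map.1 hm
        exact toTC_ne_rep x a m he
    · intro ι H' hH' x hx
      rcases Set.mem_insert_iff.1 hH' with hH' | hH'
      · injection hH' with e1 e2
        have e1' : t = RuleTag.inst ι := e1.symm
        subst e1'; subst e2
        obtain ⟨_, _, hB, _⟩ := fires_inst_inv hf
        subst hB
        simp only [chrToLa, Set.mem_setOf_eq]
        have hxv : x ∈ ι.concl.val := Eq.mpr Finset.mem_val (Finset.mem_coe.1 hx)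
        have hxB := Multiset.mem_map_of_mem toTC hxv
        cases x with
        | pos a => exact Or.inl ⟨a, rfl, Or.inl (Or.inl hxB)⟩
        | del a => exact Or.inr ⟨a, rfl, Or.inl (Or.inl hxB)⟩
      · exact hmono (hHI ι H' hH' hx)

lemma inv_reachable {P : Set (Inst α)} {χ : CState α} (h : Reachable P χ) : Inv P χ := by
  obtain ⟨χ₀, h₀, hsteps⟩ := h
  induction hsteps with
  | refl => exact inv_init h₀
  | tail _ hstep ih =>
    obtain ⟨l, hl⟩ := hstep
    exact inv_step ih hl

/-- In a pre-normal state, membership in `A` reduces to the store. -/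
lemma memA_preNormal {χ : CState α} (hpn : PreNormal χ) (c : TC α) :
    memA χ c ↔ ∃ i, (c, i) ∈ χ.store := by
  unfold memA
  rw [hpn.1]
  simp

lemma fires_of_applicable {P : Set (Inst α)} {χ : CState α} {ι : Inst α}
    (hpn : PreNormal χ) (hap : LAApplicable P (chrToLa χ) ι) :
    ∃ H, Fires P χ (.inst ι) H ∅ (Multiset.map toTC ι.concl.val) := by
  classical
  obtain ⟨hP, hpos, hneg, _⟩ := hap
  have hstore := hpn.2.1
  have hpos' : ∀ a ∈ ι.posA, ∃ i, (TC.rep a Mode.p, i) ∈ χ.store := by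
    intro a ha
    obtain ⟨h1, h2⟩ := hpos a ha
    rw [mem_chrToLa_pos] at h1
    rcases h1 with h1 | ⟨m, hm, h1⟩
    · rw [memA_preNormal hpn] at h1
      obtain ⟨i, hi⟩ := h1
      obtain ⟨b, m', hb⟩ := hstore _ hi
      simp at hb
    · rw [memA_preNormal hpn] at h1
      obtain ⟨i, hi⟩ := h1
      by_cases hmp : m = Mode.p
      · exact ⟨i, hmp ▸ hi⟩
      · exfalso
        apply h2
        rw [mem_chrToLa_del]
        exact Or.inr ⟨m, hmp, (memA_preNormal hpn _).2 ⟨i, hi⟩⟩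
  have hneg' : ∀ a ∈ ι.negA, ∃ mi : Mode × ℕ,
      mi.1 ≠ Mode.p ∧ (TC.rep a mi.1, mi.2) ∈ χ.store := by
    intro a ha
    have h1 := hneg a ha
    rw [mem_chrToLa_del] at h1
    rcases h1 with h1 | ⟨m, hm, h1⟩
    · rw [memA_preNormal hpn] at h1
      obtain ⟨i, hi⟩ := h1
      obtain ⟨b, m', hb⟩ := hstore _ hi
      simp at hb
    · rw [memA_preNormal hpn] at h1
      obtain ⟨i, hi⟩ := h1
      exact ⟨(m, i), hm, hi⟩
  choose fP hfP using hpos'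
  choose g hg1 hg2 using hneg'
  refine ⟨_, Fires.inst ι
    (fun a => if h : a ∈ ι.posA then fP a h else 0)
    (fun a => if h : a ∈ ι.negA then (g a h).2 else 0)
    (fun a => if h : a ∈ ι.negA then (g a h).1 else Mode.p) hP ?_ ?_⟩
  · intro a ha
    simp only [dif_pos ha]
    exact hfP a ha
  · intro a ha
    simp only [dif_pos ha]
    exact ⟨hg1 a ha, hg2 a ha⟩

lemma applicable_of_fires {P : Set (Inst α)} {χ : CState α} {ι : Inst α} {H R B}
    (hpn : PreNormal χ) (hI : Inv P χ) (hf : Fires P χ (.inst ι) H R B)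
    (hni : ¬ Implied ι χ) : LAApplicable P (chrToLa χ) ι := by
  obtain ⟨hP, _, _, fp, fn, fm, hpos, hneg⟩ := fires_inst_inv hf
  have hstore := hpn.2.1
  have hRU := hI.2.2.2.1
  refine ⟨hP, ?_, ?_, hni⟩
  · intro a ha
    have hp := hpos a ha
    constructor
    · rw [mem_chrToLa_pos]
      exact Or.inr ⟨Mode.p, by decide, (memA_preNormal hpn _).2 ⟨fp a, hp⟩⟩
    · intro hd
      rw [mem_chrToLa_del] at hd
      rcases hd with hd | ⟨m, hm, hd⟩
      · rw [memA_preNormal hpn] at hd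
        obtain ⟨i, hi⟩ := hd
        obtain ⟨b, m', hb⟩ := hstore _ hi
        simp at hb
      · rw [memA_preNormal hpn] at hd
        obtain ⟨i, hi⟩ := hd
        exact hm (hRU a m i Mode.p (fp a) hi hp).1
  · intro a ha
    obtain ⟨hm, hmem⟩ := hneg a ha
    rw [mem_chrToLa_del]
    exact Or.inr ⟨fm a, hm, (memA_preNormal hpn _).2 ⟨fn a, hmem⟩⟩

lemma chrToLa_apply_inst {P : Set (Inst α)} {χ : CState α} {ι : Inst α} {H}
    (hg : χ.goal = 0) :
    chrToLa ⟨Multiset.map toTC ι.concl.val, χ.store \ ∅,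
      insert (RuleTag.inst ι, H) χ.hist, χ.next⟩ = chrToLa χ ∪ ↑ι.concl := by
  have hst : χ.store \ (∅ : Set (TC α × ℕ)) = χ.store := Set.diff_empty
  have hmem : ∀ c : TC α,
      memA ⟨Multiset.map toTC ι.concl.val, χ.store \ ∅,
        insert (RuleTag.inst ι, H) χ.hist, χ.next⟩ c ↔
      c ∈ Multiset.map toTC ι.concl.val ∨ memA χ c := by
    intro c
    unfold memA
    rw [hg, hst]
    simp
  have hraw : ∀ a : α, TC.raw a ∈ Multiset.map toTC ι.concl.val ↔
      LAAtom.pos a ∈ ι.concl := by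
    intro a
    simp only [Multiset.mem_map]
    constructor
    · rintro ⟨x, hx, he⟩
      cases x with
      | pos b =>
        obtain rfl := (TC.raw.inj he)
        exact Eq.mp Finset.mem_val hx
      | del b => simp [toTC] at he
    · intro hx
      exact ⟨LAAtom.pos a, Eq.mpr Finset.mem_val hx, rfl⟩
  have hrawDel : ∀ a : α, TC.rawDel a ∈ Multiset.map toTC ι.concl.val ↔
      LAAtom.del a ∈ ι.concl := by
    intro a
    simp only [Multiset.mem_map]
    constructor
    · rintro ⟨x, hx, he⟩
      cases x with
      | pos b => simp [toTC] at he
      | del b =>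
        obtain rfl := (TC.rawDel.inj he)
        exact Eq.mp Finset.mem_val hx
    · intro hx
      exact ⟨LAAtom.del a, Eq.mpr Finset.mem_val hx, rfl⟩
  have hrep : ∀ (a : α) (m : Mode),
      TC.rep a m ∉ Multiset.map toTC ι.concl.val := by
    intro a m hc
    obtain ⟨x, _, he⟩ := Multiset.mem_map.1 hc
    exact toTC_ne_rep x a m he
  ext x
  cases x with
  | pos a =>
    simp only [Set.mem_union, mem_chrToLa_pos, hmem, hraw, Finset.mem_coe]
    constructor
    · rintro ((hc | hx) | ⟨m, hm, hx | hx⟩)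
      · exact Or.inr hc
      · exact Or.inl (Or.inl hx)
      · exact absurd hx (hrep a m)
      · exact Or.inl (Or.inr ⟨m, hm, hx⟩)
    · rintro ((hx | ⟨m, hm, hx⟩) | hc)
      · exact Or.inl (Or.inr hx)
      · exact Or.inr ⟨m, hm, Or.inr hx⟩
      · exact Or.inl (Or.inl hc)
  | del a =>
    simp only [Set.mem_union, mem_chrToLa_del, hmem, hrawDel, Finset.mem_coe]
    constructor
    · rintro ((hc | hx) | ⟨m, hm, hx | hx⟩)
      · exact Or.inr hc
      · exact Or.inl (Or.inl hx)
      · exact absurd hx (hrep a m)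
      · exact Or.inl (Or.inr ⟨m, hm, hx⟩)
    · rintro ((hx | ⟨m, hm, hx⟩) | hc)
      · exact Or.inl (Or.inr hx)
      · exact Or.inr ⟨m, hm, Or.inr hx⟩
      · exact Or.inl (Or.inl hc)

lemma exists_min_fires {P : Set (Inst α)} {χ : CState α}
    (h : ∃ t H R B, Fires P χ t H R B ∧ (t, H) ∉ χ.hist) :
    ∃ t H R B, Fires P χ t H R B ∧ (t, H) ∉ χ.hist ∧
      ∀ t' H' R' B', Fires P χ t' H' R' B' → (t', H') ∉ χ.hist →
        RuleTag.prio t ≤ RuleTag.prio t' := by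
  obtain ⟨t, H, R, B, hf, hh⟩ := h
  set S : Set ℕ := {n | ∃ t H R B, Fires P χ t H R B ∧ (t, H) ∉ χ.hist ∧
    RuleTag.prio t = n} with hS
  have hne : S.Nonempty := ⟨RuleTag.prio t, t, H, R, B, hf, hh, rfl⟩
  obtain ⟨n, hnS, hmin⟩ := Nat.lt_wfRel.wf.has_min S hne
  obtain ⟨t₀, H₀, R₀, B₀, hf₀, hh₀, rfl⟩ := hnS
  refine ⟨t₀, H₀, R₀, B₀, hf₀, hh₀, fun t' H' R' B' hf' hh' => ?_⟩
  exact Nat.le_of_not_lt (hmin _ ⟨t', H', R', B', hf', hh', rfl⟩)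

end LA2CHR

open LA2CHR in
/-- For every Logical Algorithms state `σLA` and every normalized CHR execution state
`σ = ⟨∅, S, true, T⟩_n` of the translated program `T(P)` with `σLA = chrToLa σ`:
there is an LA transition `σLA → σ'LA` if and only if there is an ω_p transition
`σ → σ'` firing a non-implied rule instance with `σ'LA = chrToLa σ'`. -/
theorem la_step_iff_nonimplied_chr_step {α : Type} [DecidableEq α]
    (P : Set (Inst α)) (σLA : Set (LAAtom α)) (χ : CState α)
    (hreach : Reachable P χ) (hnorm : Normalized P χ) (heq : chrToLa χ = σLA) :
    ∀ σ'LA : Set (LAAtom α),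
      LAStep P σLA σ'LA ↔
        ∃ ι χ', Step P χ (Lab.apply (RuleTag.inst ι)) χ' ∧ ¬ Implied ι χ ∧
          chrToLa χ' = σ'LA := by
  obtain ⟨hpn, hnd⟩ := hnorm
  have hInv := inv_reachable hreach
  subst heq
  intro σ'
  constructor
  · rintro ⟨ι, hap, rfl, hminLA⟩
    obtain ⟨H, hfι⟩ := fires_of_applicable hpn hap
    have hnotin : (RuleTag.inst ι, H) ∉ χ.hist := by
      intro hmem
      exact hap.2.2.2 (hInv.2.2.2.2.2 ι H hmem)
    rcases hnd with hnone | ⟨ι₀, χ₀', hstep₀, hni₀⟩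
    · exfalso
      obtain ⟨t₀, H₀, R₀, B₀, hf₀, hh₀, hm₀⟩ :=
        exists_min_fires ⟨_, _, _, _, hfι, hnotin⟩
      exact hnone _ _ (Step.apply χ t₀ H₀ R₀ B₀ hpn.1 hf₀ hh₀ hm₀)
    · cases hstep₀ with
      | apply t0 H0 R0 B0 hg0 hf0 hnh0 hmin0 =>
        have hap₀ : LAApplicable P (chrToLa χ) ι₀ :=
          applicable_of_fires hpn hInv hf0 hni₀
        have hprio : ι.prio ≤ ι₀.prio := hminLA ι₀ hap₀
        have hminι : ∀ t' H' R' B', Fires P χ t' H' R' B' → (t', H') ∉ χ.hist →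
            RuleTag.prio (RuleTag.inst ι) ≤ RuleTag.prio t' := by
          intro t' H' R' B' hf' hh'
          refine le_trans ?_ (hmin0 t' H' R' B' hf' hh')
          simp only [RuleTag.prio]
          omega
        exact ⟨ι, _,
          Step.apply χ (RuleTag.inst ι) H ∅ (Multiset.map toTC ι.concl.val)
            hpn.1 hfι hnotin hminι,
          hap.2.2.2, chrToLa_apply_inst (P := P) hpn.1⟩
  · rintro ⟨ι, χ', hstep, hni, rfl⟩
    cases hstep with
    | apply t0 H0 R0 B0 hg0 hf0 hnh0 hmin0 =>
      have hap : LAApplicable P (chrToLa χ) ι :=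
        applicable_of_fires hpn hInv hf0 hni
      obtain ⟨-, rfl, rfl, -⟩ := fires_inst_inv hf0
      refine ⟨ι, hap, chrToLa_apply_inst (P := P) hpn.1, ?_⟩
      intro ι' hap'
      obtain ⟨H', hf'⟩ := fires_of_applicable hpn hap'
      have hnh' : (RuleTag.inst ι', H') ∉ χ.hist := by
        intro hmem
        exact hap'.2.2.2 (hInv.2.2.2.2.2 ι' H' hmem)
      have := hmin0 _ _ _ _ hf' hnh'
      simp only [RuleTag.prio] at this
      omega
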